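/- Suppose T, N : \mathbb{R} \to \mathbb{C}^3 are differentiable with T real-valued, satisfying T'(x) = \Re(\overline{\psi(x)} N(x)) and N'(x) = -\psi(x) T(x) for some continuous \psi : \mathbb{R}\to\mathbb{C}, and suppose at some point x_0 the triple (T(x_0), \Re N(x_0), \Im N(x_0)) is orthonormal in \mathbb{R}^3. Then (T(x), \Re N(x), \Im N(x)) is orthonormal for every x \in \mathbb{R}. -/

import Mathlib

open Set

private lemma tri4 (p1 p2 p3 p4 a1 a2 a3 a4 M D : ℝ)
    (hp1 : |p1| ≤ M) (hp2 : |p2| ≤ M) (hp3 : |p3| ≤ M) (hp4 : |p4| ≤ M)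
    (ha1 : |a1| ≤ D) (ha2 : |a2| ≤ D) (ha3 : |a3| ≤ D) (ha4 : |a4| ≤ D) :
    |p1 * a1 + p2 * a2 + p3 * a3 + p4 * a4| ≤ 4 * M * D := by
  have hD : 0 ≤ D := (abs_nonneg a1).trans ha1
  have hM : 0 ≤ M := (abs_nonneg p1).trans hp1
  have h1 : |p1 * a1| ≤ M * D := by
    rw [abs_mul]; exact mul_le_mul hp1 ha1 (abs_nonneg _) hM
  have h2 : |p2 * a2| ≤ M * D := by
    rw [abs_mul]; exact mul_le_mul hp2 ha2 (abs_nonneg _) hM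
  have h3 : |p3 * a3| ≤ M * D := by
    rw [abs_mul]; exact mul_le_mul hp3 ha3 (abs_nonneg _) hM
  have h4 : |p4 * a4| ≤ M * D := by
    rw [abs_mul]; exact mul_le_mul hp4 ha4 (abs_nonneg _) hM
  have t1 : |p1 * a1 + p2 * a2 + p3 * a3 + p4 * a4| ≤
      |p1 * a1| + |p2 * a2| + |p3 * a3| + |p4 * a4| := by
    calc |p1 * a1 + p2 * a2 + p3 * a3 + p4 * a4|
        ≤ |p1 * a1 + p2 * a2 + p3 * a3| + |p4 * a4| := abs_add_le _ _
      _ ≤ (|p1 * a1 + p2 * a2| + |p3 * a3|) + |p4 * a4| := by gcongr; exact abs_add_le _ _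
      _ ≤ ((|p1 * a1| + |p2 * a2|) + |p3 * a3|) + |p4 * a4| := by gcongr; exact abs_add_le _ _
  linarith

/-- `(T, Re N, Im N)` is an orthonormal triple in `ℝ³`. -/
def OrthFrame (T : Fin 3 → ℝ) (N : Fin 3 → ℂ) : Prop :=
  (∑ i : Fin 3, (T i) ^ 2 = 1) ∧ (∑ i : Fin 3, (N i).re ^ 2 = 1) ∧
  (∑ i : Fin 3, (N i).im ^ 2 = 1) ∧
  (∑ i : Fin 3, T i * (N i).re = 0) ∧ (∑ i : Fin 3, T i * (N i).im = 0) ∧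
  (∑ i : Fin 3, (N i).re * (N i).im = 0)

theorem stmt17 (T : ℝ → Fin 3 → ℝ) (N : ℝ → Fin 3 → ℂ) (ψ : ℝ → ℂ) (hψ : Continuous ψ)
    (hT : ∀ x : ℝ, HasDerivAt T (fun i => ((starRingEnd ℂ) (ψ x) * N x i).re) x)
    (hN : ∀ x : ℝ, HasDerivAt N (fun i => -(ψ x * ((T x i : ℝ) : ℂ))) x)
    (x₀ : ℝ) (h0 : OrthFrame (T x₀) (N x₀)) :
    ∀ x : ℝ, OrthFrame (T x) (N x) := by
  -- componentwise derivatives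
  have hTc : ∀ x i, HasDerivAt (fun x => T x i)
      ((ψ x).re * (N x i).re + (ψ x).im * (N x i).im) x := by
    intro x i
    have h := hasDerivAt_pi.1 (hT x) i
    refine h.congr_deriv ?_
    simp [Complex.mul_re]
  have hNc : ∀ x i, HasDerivAt (fun x => N x i) (-(ψ x * ((T x i : ℝ) : ℂ))) x :=
    fun x i => hasDerivAt_pi.1 (hN x) i
  have hRc : ∀ x i, HasDerivAt (fun x => (N x i).re) (-((ψ x).re * T x i)) x := by
    intro x i
    have h := Complex.reCLM.hasFDerivAt.comp_hasDerivAt x (hNc x i)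
    refine h.congr_deriv ?_
    simp
  have hIc : ∀ x i, HasDerivAt (fun x => (N x i).im) (-((ψ x).im * T x i)) x := by
    intro x i
    have h := Complex.imCLM.hasFDerivAt.comp_hasDerivAt x (hNc x i)
    refine h.congr_deriv ?_
    simp
  -- the six scalar quantities and their derivatives
  have hA : ∀ x, HasDerivAt (fun x => ∑ i : Fin 3, T x i ^ 2)
      (2 * (ψ x).re * (∑ i : Fin 3, T x i * (N x i).re)
        + 2 * (ψ x).im * (∑ i : Fin 3, T x i * (N x i).im)) x := by
    intro x
    have h := HasDerivAt.fun_sum (fun i (_ : i ∈ Finset.univ) => ((hTc x i).pow 2))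
    refine h.congr_deriv ?_
    simp [Fin.sum_univ_three]
    ring
  have hB : ∀ x, HasDerivAt (fun x => ∑ i : Fin 3, (N x i).re ^ 2)
      (-(2 * (ψ x).re * (∑ i : Fin 3, T x i * (N x i).re))) x := by
    intro x
    have h := HasDerivAt.fun_sum (fun i (_ : i ∈ Finset.univ) => ((hRc x i).pow 2))
    refine h.congr_deriv ?_
    simp [Fin.sum_univ_three]
    ring
  have hC : ∀ x, HasDerivAt (fun x => ∑ i : Fin 3, (N x i).im ^ 2)
      (-(2 * (ψ x).im * (∑ i : Fin 3, T x i * (N x i).im))) x := by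
    intro x
    have h := HasDerivAt.fun_sum (fun i (_ : i ∈ Finset.univ) => ((hIc x i).pow 2))
    refine h.congr_deriv ?_
    simp [Fin.sum_univ_three]
    ring
  have hD : ∀ x, HasDerivAt (fun x => ∑ i : Fin 3, T x i * (N x i).re)
      ((ψ x).re * (∑ i : Fin 3, (N x i).re ^ 2)
        + (ψ x).im * (∑ i : Fin 3, (N x i).re * (N x i).im)
        - (ψ x).re * (∑ i : Fin 3, T x i ^ 2)) x := by
    intro x
    have h := HasDerivAt.fun_sum (fun i (_ : i ∈ Finset.univ) => ((hTc x i).mul (hRc x i)))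
    refine h.congr_deriv ?_
    simp [Fin.sum_univ_three]
    ring
  have hE : ∀ x, HasDerivAt (fun x => ∑ i : Fin 3, T x i * (N x i).im)
      ((ψ x).im * (∑ i : Fin 3, (N x i).im ^ 2)
        + (ψ x).re * (∑ i : Fin 3, (N x i).re * (N x i).im)
        - (ψ x).im * (∑ i : Fin 3, T x i ^ 2)) x := by
    intro x
    have h := HasDerivAt.fun_sum (fun i (_ : i ∈ Finset.univ) => ((hTc x i).mul (hIc x i)))
    refine h.congr_deriv ?_
    simp [Fin.sum_univ_three]
    ring
  have hF : ∀ x, HasDerivAt (fun x => ∑ i : Fin 3, (N x i).re * (N x i).im)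
      (-((ψ x).re * (∑ i : Fin 3, T x i * (N x i).im))
        - (ψ x).im * (∑ i : Fin 3, T x i * (N x i).re)) x := by
    intro x
    have h := HasDerivAt.fun_sum (fun i (_ : i ∈ Finset.univ) => ((hRc x i).mul (hIc x i)))
    refine h.congr_deriv ?_
    simp [Fin.sum_univ_three]
    ring
  have cons5 : ∀ (x0 x1 x2 x3 x4 x5 : ℝ), (![x0,x1,x2,x3,x4,x5] : Fin 6 → ℝ) 5 = x5 :=
    fun _ _ _ _ _ _ => rfl
  -- the deviation vector
  set u : ℝ → Fin 6 → ℝ := fun x =>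
    ![(∑ i : Fin 3, T x i ^ 2) - 1, (∑ i : Fin 3, (N x i).re ^ 2) - 1,
      (∑ i : Fin 3, (N x i).im ^ 2) - 1, ∑ i : Fin 3, T x i * (N x i).re,
      ∑ i : Fin 3, T x i * (N x i).im, ∑ i : Fin 3, (N x i).re * (N x i).im] with hu
  have hucont : Continuous u := by
    refine continuous_pi fun i => ?_
    have h1 : ∀ j, Continuous fun x => T x j := fun j => by
      refine continuous_iff_continuousAt.2 fun x => ?_
      exact ((hTc x j).continuousAt)
    have h2 : ∀ j, Continuous fun x => (N x j).re := fun j => by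
      refine continuous_iff_continuousAt.2 fun x => ?_
      exact ((hRc x j).continuousAt)
    have h3 : ∀ j, Continuous fun x => (N x j).im := fun j => by
      refine continuous_iff_continuousAt.2 fun x => ?_
      exact ((hIc x j).continuousAt)
    fin_cases i <;>
      · simp only [hu]
        simp [cons5]
        fun_prop
  -- main argument
  intro x
  -- interval setup
  set A : ℝ := min x₀ x - 1 with hA'
  set B : ℝ := max x₀ x + 1 with hB'
  have hAB : A ≤ B := by
    have := min_le_max (a := x₀) (b := x)
    simp only [hA', hB']; linarith
  set φ : ℝ → ℂ := fun t => ψ (max A (min t B)) with hφ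
  obtain ⟨M, hM⟩ :=
    (isCompact_Icc (a := A) (b := B)).exists_bound_of_continuousOn hψ.continuousOn
  set MM : ℝ := max M 0 with hMM
  have hMM0 : 0 ≤ MM := le_max_right _ _
  have hφbd : ∀ t, ‖φ t‖ ≤ MM := by
    intro t
    have h1 : max A (min t B) ∈ Icc A B :=
      ⟨le_max_left _ _, max_le hAB (min_le_right _ _)⟩
    exact le_trans (hM _ h1) (le_max_left _ _)
  have hre : ∀ t, |(φ t).re| ≤ MM := fun t => le_trans (Complex.abs_re_le_norm _) (hφbd t)
  have him : ∀ t, |(φ t).im| ≤ MM := fun t => le_trans (Complex.abs_im_le_norm _) (hφbd t)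
  have hφeq : ∀ t ∈ Icc A B, φ t = ψ t := by
    intro t ht
    simp [hφ, min_eq_left ht.2, max_eq_right ht.1]
  -- the vector field
  set v : ℝ → (Fin 6 → ℝ) → (Fin 6 → ℝ) := fun t y =>
    ![2 * (φ t).re * y 3 + 2 * (φ t).im * y 4,
      -(2 * (φ t).re * y 3),
      -(2 * (φ t).im * y 4),
      (φ t).re * y 1 - (φ t).re * y 0 + (φ t).im * y 5,
      (φ t).im * y 2 - (φ t).im * y 0 + (φ t).re * y 5,
      -((φ t).re * y 4) - (φ t).im * y 3] with hv
  set K : NNReal := ⟨4 * MM, by positivity⟩ with hK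
  have hlip : ∀ t, LipschitzWith K (v t) := by
    intro t
    apply LipschitzWith.of_dist_le_mul
    intro y z
    have hKd : (K : ℝ) * dist y z = 4 * MM * dist y z := rfl
    rw [hKd]
    have hDnn : (0 : ℝ) ≤ 4 * MM * dist y z := by positivity
    rw [dist_pi_le_iff hDnn]
    intro i
    have hd : ∀ j : Fin 6, |y j - z j| ≤ dist y z := by
      intro j
      have := dist_le_pi_dist y z j
      rwa [Real.dist_eq] at this
    have hp := hre t
    have hq := him t
    have hnp : |(-(φ t).re)| ≤ MM := by rwa [abs_neg]
    have hnq : |(-(φ t).im)| ≤ MM := by rwa [abs_neg]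
    have h0' : |(0 : ℝ)| ≤ MM := by simpa using hMM0
    fin_cases i
    · refine le_trans (le_of_eq ?_) (tri4 _ _ _ _ _ _ _ _ _ _ hp hp hq hq (hd 3) (hd 3) (hd 4) (hd 4))
      rw [Real.dist_eq]
      congr 1
      simp [hv, cons5]
      ring
    · refine le_trans (le_of_eq ?_) (tri4 _ _ _ _ _ _ _ _ _ _ hnp hnp h0' h0' (hd 3) (hd 3) (hd 0) (hd 0))
      rw [Real.dist_eq]
      congr 1
      simp [hv, cons5]
      ring
    · refine le_trans (le_of_eq ?_) (tri4 _ _ _ _ _ _ _ _ _ _ hnq hnq h0' h0' (hd 4) (hd 4) (hd 0) (hd 0))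
      rw [Real.dist_eq]
      congr 1
      simp [hv, cons5]
      ring
    · refine le_trans (le_of_eq ?_) (tri4 _ _ _ _ _ _ _ _ _ _ hp hnp hq h0' (hd 1) (hd 0) (hd 5) (hd 0))
      rw [Real.dist_eq]
      congr 1
      simp [hv, cons5]
      ring
    · refine le_trans (le_of_eq ?_) (tri4 _ _ _ _ _ _ _ _ _ _ hq hnq hp h0' (hd 2) (hd 0) (hd 5) (hd 0))
      rw [Real.dist_eq]
      congr 1
      simp [hv, cons5]
      ring
    · refine le_trans (le_of_eq ?_) (tri4 _ _ _ _ _ _ _ _ _ _ hnp hnq h0' h0' (hd 4) (hd 3) (hd 0) (hd 0))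
      rw [Real.dist_eq]
      congr 1
      simp [hv, cons5]
      ring
  -- u solves the ODE on Ioo A B
  have hu' : ∀ t ∈ Ioo A B, HasDerivAt u (v t (u t)) t := by
    intro t ht
    have hφt : φ t = ψ t := hφeq t ⟨ht.1.le, ht.2.le⟩
    refine hasDerivAt_pi.2 fun i => ?_
    fin_cases i
    · have h := (hA t).sub_const 1
      refine h.congr_deriv ?_
      simp [hv, hu, hφt, cons5]
    · have h := (hB t).sub_const 1
      refine h.congr_deriv ?_
      simp [hv, hu, hφt, cons5]
      try ring
    · have h := (hC t).sub_const 1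
      refine h.congr_deriv ?_
      simp [hv, hu, hφt, cons5]
      try ring
    · have h := hD t
      refine h.congr_deriv ?_
      simp [hv, hu, hφt, cons5]
      try ring
    · have h := hE t
      refine h.congr_deriv ?_
      simp [hv, hu, hφt, cons5]
      try ring
    · have h := hF t
      refine h.congr_deriv ?_
      simp [hv, hu, hφt, cons5]
      try ring
  -- zero is also a solution
  have hv0 : ∀ t, v t 0 = 0 := by
    intro t
    funext i
    fin_cases i <;> · simp only [hv]; simp [cons5]
  have hzero' : ∀ t ∈ Ioo A B, HasDerivAt (fun _ : ℝ => (0 : Fin 6 → ℝ)) (v t 0) t := by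
    intro t _
    rw [hv0 t]
    exact hasDerivAt_const _ _
  -- x₀ and x in the interval
  have hx₀ : x₀ ∈ Ioo A B := by
    constructor
    · have : min x₀ x ≤ x₀ := min_le_left _ _
      simp only [hA']; linarith
    · have : x₀ ≤ max x₀ x := le_max_left _ _
      simp only [hB']; linarith
  have hx : x ∈ Icc A B := by
    constructor
    · have : min x₀ x ≤ x := min_le_right _ _
      simp only [hA']; linarith
    · have : x ≤ max x₀ x := le_max_right _ _
      simp only [hB']; linarith
  -- initial condition
  have hinit : u x₀ = 0 := by
    obtain ⟨e1, e2, e3, e4, e5, e6⟩ := h0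
    funext i
    fin_cases i <;> · simp only [hu]; simp [cons5, e1, e2, e3, e4, e5, e6]
  -- uniqueness
  have heq : EqOn u (fun _ => (0 : Fin 6 → ℝ)) (Icc A B) := by
    apply ODE_solution_unique_of_mem_Icc (s := fun _ => (univ : Set (Fin 6 → ℝ)))
      (fun t _ => (hlip t).lipschitzOnWith) hx₀ hucont.continuousOn hu'
      (fun _ _ => trivial) continuousOn_const hzero' (fun _ _ => trivial) hinit
  have hux : u x = 0 := heq hx
  have c0 := congrFun hux 0
  have c1 := congrFun hux 1
  have c2 := congrFun hux 2
  have c3 := congrFun hux 3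
  have c4 := congrFun hux 4
  have c5 := congrFun hux 5
  simp only [hu] at c0 c1 c2 c3 c4 c5
  simp [cons5] at c0 c1 c2 c3 c4 c5
  refine ⟨by linarith [c0], by linarith [c1], by linarith [c2], ?_, ?_, ?_⟩
  · simpa using c3
  · simpa using c4
  · simpa using c5
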